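/- For any distinct pair of nodes u and v in Ñ⊙(P,α), the sets δ⊙(v,α) and δ⊙(u,α) are disjoint; and for any distinct pair of nodes u and v in Ñ∗(P,α), the sets δ∗(v,α) and δ∗(u,α) are disjoint. -/
import Mathlib


/-- Non-empty regular expressions over alphabet `α`, identified with their parse trees. -/
inductive RE (α : Type) : Type where
  | eps : RE α
  | ch : α → RE α
  | cat : RE α → RE α → RE α
  | alt : RE α → RE α → RE α
  | star : RE α → RE α

/-- Child directions in the parse tree (a `star`-node only has an `L` child). -/
inductive Dir : Type where
  | L : Dir
  | R : Dir
  deriving DecidableEq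

/-- A node of the parse tree is identified with the path from the root to it. -/
abbrev TreePath : Type := List Dir

namespace RE

variable {α : Type}

/-- The subexpression of `R` rooted at the node reached by following path `v`
(`none` if no such node exists). -/
def sub : RE α → TreePath → Option (RE α)
  | r, [] => some r
  | .cat r _, .L :: p => sub r p
  | .cat _ s, .R :: p => sub s p
  | .alt r _, .L :: p => sub r p
  | .alt _ s, .R :: p => sub s p
  | .star r, .L :: p => sub r p
  | _, _ => none

/-- `v` is a node of the parse tree of `R`. -/
def IsNode (R : RE α) (v : TreePath) : Prop := ∃ r, R.sub v = some r

/-- The label of a position (character leaf); `none` if `p` is not a position. -/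
def labelOf (R : RE α) (p : TreePath) : Option α :=
  match R.sub p with
  | some (.ch a) => some a
  | _ => none

/-- `p` is a position of `R`, i.e. a leaf labeled by a character. -/
def IsPos (R : RE α) (p : TreePath) : Prop := ∃ a, R.labelOf p = some a

/-- `v` is a `⊙`-node (concatenation node). -/
def IsCatNode (R : RE α) (v : TreePath) : Prop := ∃ r s, R.sub v = some (.cat r s)

/-- `v` is a `∗`-node (Kleene-star node). -/
def IsStarNode (R : RE α) (v : TreePath) : Prop := ∃ r, R.sub v = some (.star r)

/-- `PosSeq r w` holds when `w` is a sequence of (paths to) positions of `r`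
whose labels spell some string of `L(r)`. -/
inductive PosSeq : RE α → List TreePath → Prop where
  | eps : PosSeq .eps []
  | ch (a : α) : PosSeq (.ch a) [[]]
  | cat {r s : RE α} {u v : List TreePath} : PosSeq r u → PosSeq s v →
      PosSeq (.cat r s) (u.map (Dir.L :: ·) ++ v.map (Dir.R :: ·))
  | altL {r s : RE α} {u : List TreePath} : PosSeq r u → PosSeq (.alt r s) (u.map (Dir.L :: ·))
  | altR {r s : RE α} {v : List TreePath} : PosSeq s v → PosSeq (.alt r s) (v.map (Dir.R :: ·))
  | starNil {r : RE α} : PosSeq (.star r) []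
  | starCons {r : RE α} {u w : List TreePath} : PosSeq r u → PosSeq (.star r) w →
      PosSeq (.star r) (u.map (Dir.L :: ·) ++ w)

/-- `first(v)`: the positions (as paths in `R`) that occur first in a position
sequence of the subexpression rooted at `v`. -/
def firstSet (R : RE α) (v : TreePath) : Set TreePath :=
  {p | ∃ r, R.sub v = some r ∧ ∃ p' w, PosSeq r (p' :: w) ∧ p = v ++ p'}

/-- `last(v)`: the positions (as paths in `R`) that occur last in a position
sequence of the subexpression rooted at `v`. -/
def lastSet (R : RE α) (v : TreePath) : Set TreePath :=
  {p | ∃ r, R.sub v = some r ∧ ∃ w p', PosSeq r (w ++ [p']) ∧ p = v ++ p'}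

/-- `follow(R,p)`: the positions that can follow `p` in a position sequence of `R`. -/
def followSet (R : RE α) (p : TreePath) : Set TreePath :=
  {q | ∃ w₁ w₂, PosSeq R (w₁ ++ p :: q :: w₂)}

/-- `firstextent(p) = {v : p ∈ first(v)}`. -/
def firstExtent (R : RE α) (p : TreePath) : Set TreePath := {v | p ∈ R.firstSet v}

/-- `lastextent(p) = {v : p ∈ last(v)}`. -/
def lastExtent (R : RE α) (p : TreePath) : Set TreePath := {v | p ∈ R.lastSet v}

/-- `firstextent(P)` for a set of positions `P`. -/
def firstExtentSet (R : RE α) (P : Set TreePath) : Set TreePath := ⋃ p ∈ P, R.firstExtent p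

/-- `lastextent(P)` for a set of positions `P`. -/
def lastExtentSet (R : RE α) (P : Set TreePath) : Set TreePath := ⋃ p ∈ P, R.lastExtent p

end RE

/-- Lowest common ancestor of two nodes = longest common prefix of the paths. -/
def lcaP : TreePath → TreePath → TreePath
  | a :: p, b :: q => if a = b then a :: lcaP p q else []
  | _, _ => []

namespace RE

variable {α : Type}

/-- `u = parent*(v)`: `u` is the lowest ancestor of `v` (possibly `v` itself)
that is a `∗`-node. -/
def IsLowestStarAnc (R : RE α) (v u : TreePath) : Prop :=
  u <+: v ∧ R.IsStarNode u ∧ ∀ w, w <+: v → R.IsStarNode w → w <+: u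

/-- `δ(p,α)`: the `α`-transitions of the position automaton out of position `p`. -/
def delta (R : RE α) (p : TreePath) (a : α) : Set TreePath :=
  {q | R.labelOf q = some a ∧ q ∈ R.followSet p}

/-- `δ(P,α) = ∪_{p ∈ P} δ(p,α)`. -/
def deltaSet (R : RE α) (P : Set TreePath) (a : α) : Set TreePath := ⋃ p ∈ P, R.delta p a

/-- Internal `⊙`-transition: `δ⊙(v,α) = {q ∈ Pos_α : right(v) ∈ firstextent(q)}`. -/
def deltaOdot (R : RE α) (v : TreePath) (a : α) : Set TreePath :=
  {q | R.labelOf q = some a ∧ q ∈ R.firstSet (v ++ [Dir.R])}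

/-- Internal `∗`-transition: `δ∗(v,α) = {q ∈ Pos_α : parent*(v) ∈ firstextent(q)}`. -/
def deltaStar (R : RE α) (v : TreePath) (a : α) : Set TreePath :=
  {q | R.labelOf q = some a ∧ ∃ u, R.IsLowestStarAnc v u ∧ q ∈ R.firstSet u}

/-- `N⊙(P,α)`: the `⊙`-transition nodes. -/
def NOdot (R : RE α) (P : Set TreePath) (a : α) : Set TreePath :=
  {v | R.IsCatNode v ∧ (v ++ [Dir.L]) ∈ R.lastExtentSet P ∧
    (∃ q, R.labelOf q = some a ∧ q ∈ R.firstSet (v ++ [Dir.R]))}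

/-- `N∗(P,α)`: the `∗`-transition nodes. -/
def NStar (R : RE α) (P : Set TreePath) (a : α) : Set TreePath :=
  {u | R.IsStarNode u ∧
    (∃ p ∈ P, ∃ q, R.labelOf q = some a ∧ R.IsLowestStarAnc (lcaP p q) u) ∧
    (∃ p ∈ P, p ∈ R.lastSet u) ∧ (∃ q, R.labelOf q = some a ∧ q ∈ R.firstSet u)}

/-- `u` `∗`-dominates `v`: `u` is a proper ancestor of `v` and `first(v) ⊆ first(u)`. -/
def StarDom (R : RE α) (u v : TreePath) : Prop :=
  u <+: v ∧ u ≠ v ∧ R.firstSet v ⊆ R.firstSet u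

/-- `u` `⊙`-dominates `v`: `u` is a proper ancestor of `v` and
`first(right(v)) ⊆ first(right(u))`. -/
def OdotDom (R : RE α) (u v : TreePath) : Prop :=
  u <+: v ∧ u ≠ v ∧ R.firstSet (v ++ [Dir.R]) ⊆ R.firstSet (u ++ [Dir.R])

/-- `Ñ⊙(P,α)`: the relevant `⊙`-transition nodes. -/
def RelNOdot (R : RE α) (P : Set TreePath) (a : α) : Set TreePath :=
  {v ∈ R.NOdot P a | ∀ u ∈ R.NOdot P a, ¬ R.OdotDom u v}

/-- `Ñ∗(P,α)`: the relevant `∗`-transition nodes. -/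
def RelNStar (R : RE α) (P : Set TreePath) (a : α) : Set TreePath :=
  {v ∈ R.NStar P a | ∀ u ∈ R.NStar P a, ¬ R.StarDom u v}

/-- `v` is a node of the transition tree `T` of `P`: an ancestor of some position of `P`. -/
def InT (R : RE α) (P : Set TreePath) (v : TreePath) : Prop := ∃ p ∈ P, v <+: p

/-- `v` is a branching node of the transition tree of `P`: both children are in `T`. -/
def Branching (R : RE α) (P : Set TreePath) (v : TreePath) : Prop :=
  R.InT P (v ++ [Dir.L]) ∧ R.InT P (v ++ [Dir.R])

/-- `v` is a leaf of the transition tree of `P`. -/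
def LeafT (R : RE α) (P : Set TreePath) (v : TreePath) : Prop :=
  R.InT P v ∧ ∀ d : Dir, ¬ R.InT P (v ++ [d])

/-- `v` is a `⊙`-live node: a `⊙`-node with `left(v) ∈ lastextent(P)`. -/
def OdotLive (R : RE α) (P : Set TreePath) (v : TreePath) : Prop :=
  R.IsCatNode v ∧ (v ++ [Dir.L]) ∈ R.lastExtentSet P

/-- `v` is weakly `⊙`-dominated by `u`: `u` is `⊙`-live, a proper ancestor of `v`,
and `first(v) ⊆ first(right(u))`. -/
def WeakOdotDom (R : RE α) (P : Set TreePath) (u v : TreePath) : Prop :=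
  R.OdotLive P u ∧ u <+: v ∧ u ≠ v ∧ R.firstSet v ⊆ R.firstSet (u ++ [Dir.R])

/-- The pair `(t, b)` delimits a segment of the transition tree of `P`: a path from a
leaf or branching node `b` up to the nearest branching node `t` strictly above it
(or to the root if there is none). -/
def IsSegment (R : RE α) (P : Set TreePath) (t b : TreePath) : Prop :=
  R.InT P b ∧ t <+: b ∧ t ≠ b ∧
  (R.LeafT P b ∨ R.Branching P b) ∧
  (R.Branching P t ∨ t = []) ∧
  (∀ w, t <+: w → w <+: b → w ≠ t → w ≠ b → ¬ R.Branching P w)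

/-- The language `L(R)`. -/
def lang : RE α → Set (List α)
  | .eps => {[]}
  | .ch a => {[a]}
  | .cat r s => {w | ∃ u ∈ lang r, ∃ v ∈ lang s, w = u ++ v}
  | .alt r s => lang r ∪ lang s
  | .star r => {w | ∃ l : List (List α), (∀ u ∈ l, u ∈ lang r) ∧ w = l.flatten}

/-- The position automaton (Glushkov automaton) of `R`: states are the positions of `R`
plus a start state `none`; for `q ∈ first(R)` there is a transition `(p₀, q, label(q))`,
and for `q ∈ follow(R,p)` a transition `(p, q, label(q))`; accepting states are
`last(R)`, together with `p₀` if `ε ∈ L(R)`. -/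
def posNFA (R : RE α) : NFA α (Option TreePath) where
  step := fun s a =>
    {t | ∃ q : TreePath, t = some q ∧ R.labelOf q = some a ∧
      ((s = none ∧ q ∈ R.firstSet []) ∨ (∃ p, s = some p ∧ q ∈ R.followSet p))}
  start := {none}
  accept := {t | (∃ p, t = some p ∧ p ∈ R.lastSet []) ∨ (t = none ∧ [] ∈ R.lang)}

end RE

namespace RE

variable {α : Type}

lemma sub_append (R : RE α) (w t : TreePath) :
    ∀ r, R.sub w = some r → R.sub (w ++ t) = r.sub t := by
  induction w generalizing R with
  | nil =>
    intro r h
    simp only [sub] at h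
    cases h
    rfl
  | cons d w ih =>
    intro r h
    cases R with
    | eps => cases d <;> simp [sub] at h
    | ch a => cases d <;> simp [sub] at h
    | cat r1 r2 => cases d <;> exact ih _ _ h
    | alt r1 r2 => cases d <;> exact ih _ _ h
    | star r1 =>
      cases d with
      | L => exact ih _ _ h
      | R => simp [sub] at h

lemma posSeq_head {r : RE α} {l : List TreePath} (h : PosSeq r l) :
    ∀ d p ws, l = (d :: p) :: ws →
      ∃ r', r.sub [d] = some r' ∧ ∃ ws', PosSeq r' (p :: ws') := by
  induction h with
  | eps => intro d p ws h; simp at h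
  | ch a => intro d p ws h; simp at h
  | @cat r s u v hu hv ihu ihv =>
    intro d p ws h
    cases u with
    | nil =>
      cases v with
      | nil => simp at h
      | cons p1 v' =>
        simp only [List.map_nil, List.nil_append, List.map_cons, List.cons.injEq] at h
        obtain ⟨h1, h2⟩ := h
        obtain ⟨rfl, rfl⟩ := h1
        exact ⟨s, by simp [RE.sub], v', hv⟩
    | cons p1 u' =>
      simp only [List.map_cons, List.cons_append, List.cons.injEq] at h
      obtain ⟨h1, h2⟩ := h
      obtain ⟨rfl, rfl⟩ := h1
      exact ⟨r, by simp [RE.sub], u', hu⟩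
  | @altL r s u hu ihu =>
    intro d p ws h
    cases u with
    | nil => simp at h
    | cons p1 u' =>
      simp only [List.map_cons, List.cons.injEq] at h
      obtain ⟨h1, h2⟩ := h
      obtain ⟨rfl, rfl⟩ := h1
      exact ⟨r, by simp [RE.sub], u', hu⟩
  | @altR r s v hv ihv =>
    intro d p ws h
    cases v with
    | nil => simp at h
    | cons p1 v' =>
      simp only [List.map_cons, List.cons.injEq] at h
      obtain ⟨h1, h2⟩ := h
      obtain ⟨rfl, rfl⟩ := h1
      exact ⟨s, by simp [RE.sub], v', hv⟩
  | @starNil r => intro d p ws h; simp at h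
  | @starCons r u w hu hw ihu ihw =>
    intro d p ws h
    cases u with
    | nil =>
      simp only [List.map_nil, List.nil_append] at h
      exact ihw d p ws h
    | cons p1 u' =>
      simp only [List.map_cons, List.cons_append, List.cons.injEq] at h
      obtain ⟨h1, h2⟩ := h
      obtain ⟨rfl, rfl⟩ := h1
      exact ⟨r, by simp [RE.sub], u', hu⟩

lemma posSeq_lift {r : RE α} {l : List TreePath} (h : PosSeq r l) :
    ∀ d p ws, l = (d :: p) :: ws → ∀ r', r.sub [d] = some r' →
    ∀ p₂ w₂, PosSeq r' (p₂ :: w₂) → ∃ ws₂, PosSeq r ((d :: p₂) :: ws₂) := by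
  induction h with
  | eps => intro d p ws h; simp at h
  | ch a => intro d p ws h; simp at h
  | @cat r s u v hu hv ihu ihv =>
    intro d p ws h r' hr' p₂ w₂ hseq
    cases u with
    | nil =>
      cases v with
      | nil => simp at h
      | cons p1 v' =>
        simp only [List.map_nil, List.nil_append, List.map_cons, List.cons.injEq] at h
        obtain ⟨h1, h2⟩ := h
        obtain ⟨rfl, rfl⟩ := h1
        simp only [sub] at hr'
        cases hr'
        exact ⟨List.map (Dir.R :: ·) w₂, by
          have := PosSeq.cat hu hseq
          simpa using this⟩
    | cons p1 u' =>
      simp only [List.map_cons, List.cons_append, List.cons.injEq] at h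
      obtain ⟨h1, h2⟩ := h
      obtain ⟨rfl, rfl⟩ := h1
      simp only [sub] at hr'
      cases hr'
      exact ⟨List.map (Dir.L :: ·) w₂ ++ List.map (Dir.R :: ·) v, by
        have := PosSeq.cat hseq hv
        simpa using this⟩
  | @altL r s u hu ihu =>
    intro d p ws h r' hr' p₂ w₂ hseq
    cases u with
    | nil => simp at h
    | cons p1 u' =>
      simp only [List.map_cons, List.cons.injEq] at h
      obtain ⟨h1, h2⟩ := h
      obtain ⟨rfl, rfl⟩ := h1
      simp only [sub] at hr'
      cases hr'
      exact ⟨List.map (Dir.L :: ·) w₂, by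
        have := PosSeq.altL (s := s) hseq
        simpa using this⟩
  | @altR r s v hv ihv =>
    intro d p ws h r' hr' p₂ w₂ hseq
    cases v with
    | nil => simp at h
    | cons p1 v' =>
      simp only [List.map_cons, List.cons.injEq] at h
      obtain ⟨h1, h2⟩ := h
      obtain ⟨rfl, rfl⟩ := h1
      simp only [sub] at hr'
      cases hr'
      exact ⟨List.map (Dir.R :: ·) w₂, by
        have := PosSeq.altR (r := r) hseq
        simpa using this⟩
  | @starNil r => intro d p ws h; simp at h
  | @starCons r u w hu hw ihu ihw =>
    intro d p ws h r' hr' p₂ w₂ hseq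
    cases u with
    | nil =>
      simp only [List.map_nil, List.nil_append] at h
      exact ihw d p ws h r' hr' p₂ w₂ hseq
    | cons p1 u' =>
      simp only [List.map_cons, List.cons_append, List.cons.injEq] at h
      obtain ⟨h1, h2⟩ := h
      obtain ⟨rfl, rfl⟩ := h1
      simp only [sub] at hr'
      cases hr'
      exact ⟨List.map (Dir.L :: ·) w₂, by
        have := PosSeq.starCons hseq (PosSeq.starNil (r := r))
        simpa using this⟩

lemma mem_first_prefix {R : RE α} {w q : TreePath} (h : q ∈ R.firstSet w) : w <+: q := by
  obtain ⟨r, -, p', ws, -, rfl⟩ := h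
  exact ⟨p', rfl⟩

lemma head_dir {w : TreePath} (d : Dir) {p' : TreePath}
    (hpre : (w ++ [d]) <+: (w ++ p')) : ∃ p'', p' = d :: p'' := by
  obtain ⟨t, ht⟩ := hpre
  rw [List.append_assoc] at ht
  have := List.append_cancel_left ht
  exact ⟨t, this.symm⟩

lemma first_descend {R : RE α} {w q : TreePath} (d : Dir)
    (h : q ∈ R.firstSet w) (hpre : (w ++ [d]) <+: q) : q ∈ R.firstSet (w ++ [d]) := by
  obtain ⟨r, hr, p', ws, hseq, rfl⟩ := h
  obtain ⟨p'', rfl⟩ := head_dir d hpre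
  obtain ⟨r', hr', ws', hseq'⟩ := posSeq_head hseq d p'' ws rfl
  exact ⟨r', by rw [sub_append R w [d] r hr]; exact hr', p'', ws', hseq', by simp⟩

lemma first_step_subset {R : RE α} {w q : TreePath} (d : Dir)
    (h : q ∈ R.firstSet w) (hpre : (w ++ [d]) <+: q) :
    R.firstSet (w ++ [d]) ⊆ R.firstSet w := by
  obtain ⟨r, hr, p', ws, hseq, rfl⟩ := h
  obtain ⟨p'', rfl⟩ := head_dir d hpre
  intro x hx
  obtain ⟨r', hr', p₂, w₂, hseq₂, rfl⟩ := hx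
  rw [sub_append R w [d] r hr] at hr'
  obtain ⟨ws₂, hseq₃⟩ := posSeq_lift hseq d p'' ws rfl r' hr' p₂ w₂ hseq₂
  exact ⟨r, hr, d :: p₂, ws₂, hseq₃, by simp⟩

lemma first_nested {R : RE α} : ∀ (t w q : TreePath), q ∈ R.firstSet w →
    (w ++ t) <+: q → R.firstSet (w ++ t) ⊆ R.firstSet w := by
  intro t
  induction t with
  | nil => intro w q h _; simp
  | cons d t' ih =>
    intro w q h hpre
    have h1 : (w ++ [d]) <+: q :=
      List.IsPrefix.trans ⟨t', by simp⟩ hpre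
    have h2 := first_descend d h h1
    have h3 : (w ++ [d]) ++ t' = w ++ (d :: t') := by simp
    calc R.firstSet (w ++ d :: t') = R.firstSet ((w ++ [d]) ++ t') := by rw [h3]
      _ ⊆ R.firstSet (w ++ [d]) := ih _ _ h2 (by rw [h3]; exact hpre)
      _ ⊆ R.firstSet w := first_step_subset d h h1

lemma first_nested' {R : RE α} {w w' q : TreePath} (hq : q ∈ R.firstSet w)
    (hq' : q ∈ R.firstSet w') (hpre : w <+: w') : R.firstSet w' ⊆ R.firstSet w := by
  obtain ⟨t, rfl⟩ := hpre
  exact first_nested t w q hq (mem_first_prefix hq')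

lemma odot_half {R : RE α} {P : Set TreePath} {a : α} {u v : TreePath}
    (hu : u ∈ R.RelNOdot P a) (hv : v ∈ R.RelNOdot P a) (hne : u ≠ v)
    (hlen : (u ++ [Dir.R]) <+: (v ++ [Dir.R]))
    {q : TreePath} (hqu : q ∈ R.deltaOdot u a) (hqv : q ∈ R.deltaOdot v a) : False := by
  obtain ⟨-, hqu⟩ := hqu
  obtain ⟨-, hqv⟩ := hqv
  have hsub := first_nested' hqu hqv hlen
  have hupv : u <+: v := by
    have h1 : u <+: v ++ [Dir.R] := List.IsPrefix.trans ⟨[Dir.R], rfl⟩ hlen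
    have h2 : v <+: v ++ [Dir.R] := ⟨[Dir.R], rfl⟩
    have hl : u.length ≤ v.length := by
      have := hlen.length_le
      simp only [List.length_append, List.length_cons, List.length_nil] at this
      omega
    exact List.prefix_of_prefix_length_le h1 h2 hl
  exact hv.2 u hu.1 ⟨hupv, hne, hsub⟩

lemma star_anc_self {R : RE α} {v s : TreePath} (hstar : R.IsStarNode v)
    (h : R.IsLowestStarAnc v s) : s = v := by
  obtain ⟨h1, -, h3⟩ := h
  have := h3 v (List.prefix_refl v) hstar
  exact List.IsPrefix.eq_of_length h1
    (le_antisymm h1.length_le this.length_le ▸ rfl)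

lemma star_half {R : RE α} {P : Set TreePath} {a : α} {u v : TreePath}
    (hu : u ∈ R.RelNStar P a) (hv : v ∈ R.RelNStar P a) (hne : u ≠ v)
    (hlen : u <+: v)
    {q : TreePath} (hqu : q ∈ R.deltaStar u a) (hqv : q ∈ R.deltaStar v a) : False := by
  obtain ⟨-, su, hsu, hqu⟩ := hqu
  obtain ⟨-, sv, hsv, hqv⟩ := hqv
  rw [star_anc_self hu.1.1 hsu] at hqu
  rw [star_anc_self hv.1.1 hsv] at hqv
  have hsub := first_nested' hqu hqv hlen
  exact hv.2 u hu.1 ⟨hlen, hne, hsub⟩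

end RE

/-- For any distinct pair of nodes `u, v ∈ Ñ⊙(P,α)`, the sets `δ⊙(u,α)` and `δ⊙(v,α)`
are disjoint; and for any distinct pair of nodes `u, v ∈ Ñ∗(P,α)`, the sets `δ∗(u,α)`
and `δ∗(v,α)` are disjoint. -/
theorem relevant_delta_disjoint {α : Type} (R : RE α) (P : Set TreePath) (a : α)
    (hP : ∀ p ∈ P, R.IsPos p) :
    (∀ u ∈ R.RelNOdot P a, ∀ v ∈ R.RelNOdot P a, u ≠ v →
      Disjoint (R.deltaOdot u a) (R.deltaOdot v a)) ∧
    (∀ u ∈ R.RelNStar P a, ∀ v ∈ R.RelNStar P a, u ≠ v →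
      Disjoint (R.deltaStar u a) (R.deltaStar v a)) := by
  constructor
  · intro u hu v hv hne
    rw [Set.disjoint_left]
    intro q hqu hqv
    have h1 : (u ++ [Dir.R]) <+: q := RE.mem_first_prefix hqu.2
    have h2 : (v ++ [Dir.R]) <+: q := RE.mem_first_prefix hqv.2
    rcases List.prefix_or_prefix_of_prefix h1 h2 with h | h
    · exact RE.odot_half hu hv hne h hqu hqv
    · exact RE.odot_half hv hu hne.symm h hqv hqu
  · intro u hu v hv hne
    rw [Set.disjoint_left]
    intro q hqu hqv
    obtain ⟨-, su, hsu, hqu'⟩ := id hqu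
    obtain ⟨-, sv, hsv, hqv'⟩ := id hqv
    rw [RE.star_anc_self hu.1.1 hsu] at hqu'
    rw [RE.star_anc_self hv.1.1 hsv] at hqv'
    have h1 : u <+: q := RE.mem_first_prefix hqu'
    have h2 : v <+: q := RE.mem_first_prefix hqv'
    rcases List.prefix_or_prefix_of_prefix h1 h2 with h | h
    · exact RE.star_half hu hv hne h hqu hqv
    · exact RE.star_half hv hu hne.symm h hqv hqu
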